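/- Let B be an integral domain of characteristic zero and D a nonzero locally nilpotent derivation on B with kernel A. Define μ(b) = max{n : D^n(b) ≠ 0} for b ≠ 0 and μ(0) = −∞. Then μ is a degree function: μ(ab) = μ(a) + μ(b) and μ(a+b) ≤ max(μ(a), μ(b)) for all a, b ∈ B. -/
import Mathlib


/-- A derivation is locally nilpotent if every element is killed by some iterate. -/
def IsLND {k B : Type*} [CommRing k] [CommRing B] [Algebra k B]
    (D : Derivation k B B) : Prop :=
  ∀ b : B, ∃ n : ℕ, (⇑D)^[n] b = 0

/-- `ndeg D b n` says that `n` is the `D`-degree of `b`, i.e. the largest `m` with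
`D^[m] b ≠ 0`. -/
def ndeg {k B : Type*} [CommRing k] [CommRing B] [Algebra k B]
    (D : Derivation k B B) (b : B) (n : ℕ) : Prop :=
  (⇑D)^[n] b ≠ 0 ∧ (⇑D)^[n + 1] b = 0

/-- A derivation is irreducible if the ideal generated by its image is not contained
in any proper principal ideal. -/
def IsIrred {k B : Type*} [CommRing k] [CommRing B] [Algebra k B]
    (D : Derivation k B B) : Prop :=
  ∀ b : B, Ideal.span (Set.range (⇑D)) ≤ Ideal.span {b} → IsUnit b


open Finset

lemma iterD_zero {k B : Type*} [CommRing k] [CommRing B] [Algebra k B]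
    (D : Derivation k B B) (n : ℕ) : (⇑D)^[n] (0 : B) = 0 :=
  Function.iterate_fixed (D.map_zero) n

lemma iterD_add {k B : Type*} [CommRing k] [CommRing B] [Algebra k B]
    (D : Derivation k B B) (a b : B) (n : ℕ) :
    (⇑D)^[n] (a + b) = (⇑D)^[n] a + (⇑D)^[n] b := by
  induction n generalizing a b with
  | zero => simp
  | succ n ih => simp [Function.iterate_succ_apply, map_add, ih]

lemma iterD_zero_of_ge {k B : Type*} [CommRing k] [CommRing B] [Algebra k B]
    (D : Derivation k B B) (a : B) {m n : ℕ} (h : (⇑D)^[m] a = 0) (hmn : m ≤ n) :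
    (⇑D)^[n] a = 0 := by
  obtain ⟨e, rfl⟩ := Nat.exists_eq_add_of_le hmn
  rw [add_comm, Function.iterate_add_apply, h, iterD_zero]

lemma iterD_leibniz {k B : Type*} [CommRing k] [CommRing B] [Algebra k B]
    (D : Derivation k B B) (a b : B) (n : ℕ) :
    (⇑D)^[n] (a * b)
      = ∑ i ∈ range (n + 1), n.choose i • ((⇑D)^[i] a * (⇑D)^[n - i] b) := by
  induction n with
  | zero => simp
  | succ n ih =>
    rw [Function.iterate_succ_apply', ih, map_sum]
    have hterm : ∀ i ∈ range (n + 1),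
        D (n.choose i • ((⇑D)^[i] a * (⇑D)^[n - i] b))
          = n.choose i • ((⇑D)^[i + 1] a * (⇑D)^[n - i] b)
            + n.choose i • ((⇑D)^[i] a * (⇑D)^[n + 1 - i] b) := by
      intro i hi
      rw [mem_range] at hi
      have : n + 1 - i = (n - i) + 1 := by omega
      rw [map_nsmul, D.leibniz, smul_eq_mul, smul_eq_mul, smul_add, this,
        Function.iterate_succ_apply', Function.iterate_succ_apply']
      ring_nf
    rw [Finset.sum_congr rfl hterm, Finset.sum_add_distrib,
      Finset.sum_range_succ' (fun j => (n+1).choose j • ((⇑D)^[j] a * (⇑D)^[n + 1 - j] b))]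
    simp only [Nat.choose_succ_succ', add_smul, Nat.choose_zero_right, one_smul,
      Function.iterate_zero_apply, Nat.sub_zero, Nat.succ_sub_succ_eq_sub]
    rw [Finset.sum_add_distrib, add_assoc]
    congr 1
    have h2 : ∑ x ∈ range (n + 1), n.choose x • ((⇑D)^[x] a * (⇑D)^[n + 1 - x] b)
        = ∑ x ∈ range (n + 2), n.choose x • ((⇑D)^[x] a * (⇑D)^[n + 1 - x] b) := by
      rw [Finset.sum_range_succ _ (n + 1), Nat.choose_succ_self, zero_smul, add_zero]
    rw [h2, Finset.sum_range_succ'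
      (fun j => n.choose j • ((⇑D)^[j] a * (⇑D)^[n + 1 - j] b)) (n + 1)]
    simp [Nat.succ_sub_succ]

lemma ndeg_unique {k B : Type*} [CommRing k] [CommRing B] [Algebra k B]
    (D : Derivation k B B) (a : B) {m n : ℕ}
    (hm : (⇑D)^[m] a ≠ 0 ∧ (⇑D)^[m + 1] a = 0)
    (hn : (⇑D)^[n] a ≠ 0 ∧ (⇑D)^[n + 1] a = 0) : m = n := by
  by_contra h
  rcases Nat.lt_or_ge m n with hlt | hge
  · exact hn.1 (iterD_zero_of_ge D a hm.2 hlt)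
  · exact hm.1 (iterD_zero_of_ge D a hn.2 (lt_of_le_of_ne hge (Ne.symm h)))


/-- The function `μ(b) = max {n : D^n b ≠ 0}` attached to a nonzero locally nilpotent
derivation on a domain of characteristic zero is a degree function:
`μ(ab) = μ a + μ b` and `μ(a+b) ≤ max (μ a) (μ b)` (for nonzero elements). -/
theorem degD_is_degree_function {k B : Type*} [Field k] [CharZero k]
    [CommRing B] [IsDomain B] [Algebra k B]
    (D : Derivation k B B) (hD : D ≠ 0) (hlnd : IsLND D)
    (μ : B → ℕ)
    (hμ : ∀ b : B, b ≠ 0 → ((⇑D)^[μ b] b ≠ 0 ∧ (⇑D)^[μ b + 1] b = 0)) :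
    (∀ a b : B, a ≠ 0 → b ≠ 0 → μ (a * b) = μ a + μ b) ∧
    (∀ a b : B, a ≠ 0 → b ≠ 0 → a + b ≠ 0 → μ (a + b) ≤ max (μ a) (μ b)) := by
  haveI : CharZero B := charZero_of_injective_algebraMap (algebraMap k B).injective
  constructor
  · intro a b ha hb
    obtain ⟨ha1, ha2⟩ := hμ a ha
    obtain ⟨hb1, hb2⟩ := hμ b hb
    have key1 : (⇑D)^[μ a + μ b] (a * b) ≠ 0 := by
      rw [iterD_leibniz]
      rw [Finset.sum_eq_single (μ a)]
      · rw [Nat.add_sub_cancel_left]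
        refine fun h => ?_
        have := smul_eq_zero.mp h
        rcases this with h | h
        · exact absurd (Nat.cast_injective (by exact_mod_cast h : ((μ a + μ b).choose (μ a) : ℕ) = 0))
            (Nat.choose_pos (Nat.le_add_right _ _)).ne'
        · exact (mul_ne_zero ha1 hb1) h
      · intro i hi hne
        rcases Nat.lt_or_ge i (μ a) with hlt | hge
        · have : (⇑D)^[μ a + μ b - i] b = 0 :=
            iterD_zero_of_ge D b hb2 (by omega)
          rw [this, mul_zero, smul_zero]
        · have : (⇑D)^[i] a = 0 :=
            iterD_zero_of_ge D a ha2 (by omega)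
          rw [this, zero_mul, smul_zero]
      · intro h
        exact absurd (Finset.mem_range.mpr (by omega)) h
    have key2 : (⇑D)^[μ a + μ b + 1] (a * b) = 0 := by
      rw [iterD_leibniz]
      refine Finset.sum_eq_zero fun i hi => ?_
      rcases Nat.lt_or_ge i (μ a + 1) with hlt | hge
      · have : (⇑D)^[μ a + μ b + 1 - i] b = 0 :=
          iterD_zero_of_ge D b hb2 (by omega)
        rw [this, mul_zero, smul_zero]
      · have : (⇑D)^[i] a = 0 := iterD_zero_of_ge D a ha2 (by omega)
        rw [this, zero_mul, smul_zero]
    exact ndeg_unique D (a * b) (hμ (a * b) (mul_ne_zero ha hb)) ⟨key1, key2⟩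
  · intro a b ha hb hab
    obtain ⟨h1, h2⟩ := hμ (a + b) hab
    by_contra h
    push_neg at h
    have hz : (⇑D)^[μ (a + b)] (a + b) = 0 := by
      rw [iterD_add,
        iterD_zero_of_ge D a (hμ a ha).2 (by omega),
        iterD_zero_of_ge D b (hμ b hb).2 (by omega), add_zero]
    exact h1 hz
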